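/- In a Hilbert space H, if {y_n} is an alternate dual frame for a frame {x_n}, meaning x = Σ_n ⟨x, y_n⟩ x_n for all x ∈ H and both sequences are frames, then {x_n} is an alternate dual frame for {y_n}, i.e., y = Σ_n ⟨y, x_n⟩ y_n for all y ∈ H. -/

import Mathlib

open scoped ComplexConjugate

/-- Frame inequality predicate. -/
def IsFrame {H : Type*} [NormedAddCommGroup H] [InnerProductSpace ℂ H]
    (φ : ℕ → H) : Prop :=
  ∃ A B : ℝ, 0 < A ∧ 0 < B ∧ ∀ f : H,
    Summable (fun n => ‖(inner ℂ (φ n) f : ℂ)‖ ^ 2) ∧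
    A * ‖f‖ ^ 2 ≤ ∑' n, ‖(inner ℂ (φ n) f : ℂ)‖ ^ 2 ∧
    ∑' n, ‖(inner ℂ (φ n) f : ℂ)‖ ^ 2 ≤ B * ‖f‖ ^ 2


lemma frame_finset_est {H : Type*} [NormedAddCommGroup H] [InnerProductSpace ℂ H]
    (y : ℕ → H) (B : ℝ) (hB : 0 < B)
    (hub : ∀ f : H, Summable (fun n => ‖(inner ℂ (y n) f : ℂ)‖ ^ 2) ∧
      ∑' n, ‖(inner ℂ (y n) f : ℂ)‖ ^ 2 ≤ B * ‖f‖ ^ 2)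
    (c : ℕ → ℂ) (t : Finset ℕ) :
    ‖∑ n ∈ t, c n • y n‖ ^ 2 ≤ B * ∑ n ∈ t, ‖c n‖ ^ 2 := by
  set v := ∑ n ∈ t, c n • y n with hv
  have h1 : ‖v‖ ^ 2 ≤ ∑ n ∈ t, ‖c n‖ * ‖(inner ℂ (y n) v : ℂ)‖ := by
    have hvv : (inner ℂ v v : ℂ) = ∑ n ∈ t, conj (c n) * inner ℂ (y n) v := by
      rw [hv, sum_inner]
      exact Finset.sum_congr rfl fun n _ => inner_smul_left _ _ _
    calc ‖v‖ ^ 2 = ‖(inner ℂ v v : ℂ)‖ := by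
          rw [inner_self_eq_norm_sq_to_K (𝕜 := ℂ)]
          simp [norm_pow]
      _ = ‖∑ n ∈ t, conj (c n) * inner ℂ (y n) v‖ := by rw [hvv]
      _ ≤ ∑ n ∈ t, ‖conj (c n) * (inner ℂ (y n) v : ℂ)‖ := norm_sum_le _ _
      _ = ∑ n ∈ t, ‖c n‖ * ‖(inner ℂ (y n) v : ℂ)‖ := by
          simp [norm_mul]
  have h2 : (∑ n ∈ t, ‖c n‖ * ‖(inner ℂ (y n) v : ℂ)‖) ^ 2 ≤
      (∑ n ∈ t, ‖c n‖ ^ 2) * ∑ n ∈ t, ‖(inner ℂ (y n) v : ℂ)‖ ^ 2 :=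
    Finset.sum_mul_sq_le_sq_mul_sq t _ _
  have h3 : ∑ n ∈ t, ‖(inner ℂ (y n) v : ℂ)‖ ^ 2 ≤ B * ‖v‖ ^ 2 :=
    (Summable.sum_le_tsum t (fun n _ => by positivity) (hub v).1).trans (hub v).2
  have hc0 : 0 ≤ ∑ n ∈ t, ‖c n‖ ^ 2 := by positivity
  have hvnn : 0 ≤ ‖v‖ := norm_nonneg v
  have hsum_nn : 0 ≤ ∑ n ∈ t, ‖c n‖ * ‖(inner ℂ (y n) v : ℂ)‖ := by positivity
  have key : (‖v‖ ^ 2) ^ 2 ≤ (∑ n ∈ t, ‖c n‖ ^ 2) * (B * ‖v‖ ^ 2) :=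
    (pow_le_pow_left₀ (by positivity) h1 2).trans
      (h2.trans (mul_le_mul_of_nonneg_left h3 hc0))
  rcases eq_or_lt_of_le (sq_nonneg ‖v‖) with h0 | h0
  · rw [← h0]; positivity
  · nlinarith [key, h0]

lemma ell2_summable {H : Type*} [NormedAddCommGroup H] [InnerProductSpace ℂ H] [CompleteSpace H]
    (y : ℕ → H) (B : ℝ) (hB : 0 < B)
    (hub : ∀ f : H, Summable (fun n => ‖(inner ℂ (y n) f : ℂ)‖ ^ 2) ∧
      ∑' n, ‖(inner ℂ (y n) f : ℂ)‖ ^ 2 ≤ B * ‖f‖ ^ 2)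
    (c : ℕ → ℂ) (hc : Summable fun n => ‖c n‖ ^ 2) :
    Summable (fun n => c n • y n) := by
  rw [summable_iff_vanishing]
  intro e he
  obtain ⟨ε, hε, hball⟩ := Metric.mem_nhds_iff.mp he
  obtain ⟨s, hs⟩ := (summable_iff_vanishing.mp hc) (Metric.ball 0 (ε ^ 2 / B))
    (Metric.ball_mem_nhds _ (by positivity))
  refine ⟨s, fun t ht => hball ?_⟩
  have h1 := hs t ht
  rw [Metric.mem_ball, dist_zero_right, Real.norm_eq_abs] at h1
  have hnn : 0 ≤ ∑ n ∈ t, ‖c n‖ ^ 2 := by positivity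
  rw [abs_of_nonneg hnn] at h1
  have h2 := frame_finset_est y B hB hub c t
  rw [Metric.mem_ball, dist_zero_right]
  have : ‖∑ n ∈ t, c n • y n‖ ^ 2 < ε ^ 2 := by
    calc ‖∑ n ∈ t, c n • y n‖ ^ 2 ≤ B * ∑ n ∈ t, ‖c n‖ ^ 2 := h2
      _ < B * (ε ^ 2 / B) := by exact mul_lt_mul_of_pos_left h1 hB
      _ = ε ^ 2 := by field_simp
  nlinarith [norm_nonneg (∑ n ∈ t, c n • y n)]

/-- If {y_n} is an alternate dual frame for a frame {x_n}
(both frames, x = Σ_n ⟨x,y_n⟩ x_n for all x), then {x_n} is an alternate dual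
frame for {y_n}: y = Σ_n ⟨y,x_n⟩ y_n for all y ∈ H. -/
theorem stmt1 {H : Type*} [NormedAddCommGroup H] [InnerProductSpace ℂ H] [CompleteSpace H]
    (x y : ℕ → H) (hx : IsFrame x) (hy : IsFrame y)
    (hrecon : ∀ f : H, HasSum (fun n => (inner ℂ (y n) f : ℂ) • x n) f) :
    ∀ g : H, HasSum (fun n => (inner ℂ (x n) g : ℂ) • y n) g := by
  intro g
  obtain ⟨Ax, Bx, hAx, hBx, hxf⟩ := hx
  obtain ⟨Ay, By, hAy, hBy, hyf⟩ := hy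
  have hub : ∀ f : H, Summable (fun n => ‖(inner ℂ (y n) f : ℂ)‖ ^ 2) ∧
      ∑' n, ‖(inner ℂ (y n) f : ℂ)‖ ^ 2 ≤ By * ‖f‖ ^ 2 :=
    fun f => ⟨(hyf f).1, (hyf f).2.2⟩
  have hc : Summable (fun n => ‖(inner ℂ (x n) g : ℂ)‖ ^ 2) := (hxf g).1
  have hsumm : Summable (fun n => (inner ℂ (x n) g : ℂ) • y n) :=
    ell2_summable y By hBy hub _ hc
  have hh := hsumm.hasSum
  set h := ∑' n, (inner ℂ (x n) g : ℂ) • y n with hdef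
  suffices hgh : h = g by rwa [hgh] at hh
  apply ext_inner_left ℂ
  intro f
  have H1 : HasSum (fun n => (inner ℂ (x n) g : ℂ) * inner ℂ f (y n)) (inner ℂ f h) := by
    have := hh.mapL (innerSL ℂ f)
    simpa [inner_smul_right] using this
  have H2 : HasSum (fun n => (inner ℂ (y n) f : ℂ) * inner ℂ g (x n)) (inner ℂ g f) := by
    simpa [inner_smul_right] using (hrecon f).mapL (innerSL ℂ g)
  have H3 : HasSum (fun n => (inner ℂ (x n) g : ℂ) * inner ℂ f (y n)) (inner ℂ f g) := by
    have := H2.star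
    simp only [star_mul', RCLike.star_def, inner_conj_symm] at this
    simpa [mul_comm] using this
  exact H1.unique H3
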